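/- Fix a positive integer m and let B = (b_1, ..., b_n) be a Ferrers board. Then for every real number x, Σ_{k=0}^{n} f_{k,m}(B) · x↓_{n-k,m} = Π_{i=1}^{n} (x + b_i - (i - 1)m), where f_{k,m}(B) is the k-th m-weighted file placement number of B. -/

import Mathlib

open scoped Classical

/-- The falling factorial `x↓ₖ = ∏_{i=0}^{k-1} (x - i)`. -/
noncomputable def ffall (x : ℝ) (k : ℕ) : ℝ := ∏ i ∈ Finset.range k, (x - i)

/-- The `m`-falling factorial `x↓_{k,m} = ∏_{i=0}^{k-1} (x - m·i)`. -/
noncomputable def mfall (x : ℝ) (m k : ℕ) : ℝ := ∏ i ∈ Finset.range k, (x - m * i)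

/-- The predicate that `b 0 ≤ b 1 ≤ ... ≤ b (n-1)`, i.e. the column heights of a
Ferrers board with `n` columns are weakly increasing.  (Column `i`, for `0 ≤ i < n`,
corresponds to column `i+1` = `b_{i+1}` of the paper.) -/
def FerrersMono (n : ℕ) (b : ℕ → ℕ) : Prop := ∀ i, i + 1 < n → b i ≤ b (i + 1)

/-- The cells of the Ferrers board with column heights `b 0, …, b (n-1)`:
pairs `(i, j)` with `i < n` (a column, 0-indexed) and `1 ≤ j ≤ b i` (a row, 1-indexed). -/
def cellFinset (n : ℕ) (b : ℕ → ℕ) : Finset (ℕ × ℕ) :=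
  (Finset.range n ×ˢ Finset.Icc 1 ((Finset.range n).sup b)).filter fun p => p.2 ≤ b p.1

/-- The file placements of `k` rooks on the board: `k` cells, no two in the same column. -/
def filePlacements (n : ℕ) (b : ℕ → ℕ) (k : ℕ) : Finset (Finset (ℕ × ℕ)) :=
  (cellFinset n b).powerset.filter fun P =>
    P.card = k ∧ ∀ p ∈ P, ∀ q ∈ P, p ≠ q → p.1 ≠ q.1

/-- The `k`-th rook number `r_k(B)`: the number of placements of `k` cells of the board,
no two in the same row or column. -/
def rookNum (n : ℕ) (b : ℕ → ℕ) (k : ℕ) : ℕ :=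
  ((cellFinset n b).powerset.filter fun P =>
    P.card = k ∧ ∀ p ∈ P, ∀ q ∈ P, p ≠ q → p.1 ≠ q.1 ∧ p.2 ≠ q.2).card

/-- The (0-indexed) level of the (1-indexed) row `j`: level `t` (0-indexed) consists of
rows `t*m + 1, …, t*m + m`. -/
def levelOf (m j : ℕ) : ℕ := (j - 1) / m

/-- The `k`-th `m`-level rook number `r_{k,m}(B)`: the number of placements of `k` cells
of the board, no two in the same column or in the same level. -/
def mLevelRookNum (m n : ℕ) (b : ℕ → ℕ) (k : ℕ) : ℕ :=
  ((cellFinset n b).powerset.filter fun P =>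
    P.card = k ∧ ∀ p ∈ P, ∀ q ∈ P, p ≠ q →
      p.1 ≠ q.1 ∧ levelOf m p.2 ≠ levelOf m q.2).card

/-- A placement has no two cells in the same level. -/
def NoLevelRepeat (m : ℕ) (F : Finset (ℕ × ℕ)) : Prop :=
  ∀ p ∈ F, ∀ q ∈ F, p ≠ q → levelOf m p.2 ≠ levelOf m q.2

/-- The `m`-weight of a file placement `F`: the product over all rows `j` of
`1↓_{f_j, m}` where `f_j` is the number of cells of `F` in row `j`.  (Rows containing
no cell of `F` contribute `1↓_{0,m} = 1`, so it suffices to take the product over the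
rows meeting `F`.) -/
noncomputable def wtm (m : ℕ) (F : Finset (ℕ × ℕ)) : ℝ :=
  ∏ j ∈ F.image Prod.snd, mfall 1 m ((F.filter fun p => p.2 = j).card)

/-- The `k`-th `m`-weighted file placement number `f_{k,m}(B)`. -/
noncomputable def fWeightNum (m n : ℕ) (b : ℕ → ℕ) (k : ℕ) : ℝ :=
  ∑ F ∈ filePlacements n b k, wtm m F

/-- The `m`-floor of `b`: the largest multiple of `m` that is at most `b`. -/
def mfloor (m b : ℕ) : ℕ := m * (b / m)

/-- A singleton board (w.r.t. `m`): a Ferrers board such that whenever column `i` has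
nonzero remainder mod `m`, the `m`-floor strictly increases at the next column. -/
def IsSingletonBoard (m n : ℕ) (b : ℕ → ℕ) : Prop :=
  FerrersMono n b ∧ ∀ i, i + 1 < n → b i - mfloor m (b i) ≠ 0 →
    mfloor m (b i) < mfloor m (b (i + 1))

/-- The cells of `F` lying in level `l` (0-indexed). -/
def rooksInLevel (m : ℕ) (F : Finset (ℕ × ℕ)) (l : ℕ) : Finset (ℕ × ℕ) :=
  F.filter fun p => levelOf m p.2 = l

/-- `l` is the distinguished level of `F`: it contains at least two cells of `F`,
it has the fewest cells among all levels containing at least two cells of `F`,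
and it is the lowest such level (any lower level with at least two cells of `F`
contains strictly more of them). -/
def DistinguishedLevel (m : ℕ) (F : Finset (ℕ × ℕ)) (l : ℕ) : Prop :=
  2 ≤ (rooksInLevel m F l).card ∧
  (∀ l', 2 ≤ (rooksInLevel m F l').card →
    (rooksInLevel m F l).card ≤ (rooksInLevel m F l').card) ∧
  (∀ l' < l, 2 ≤ (rooksInLevel m F l').card →
    (rooksInLevel m F l).card < (rooksInLevel m F l').card)

/-- The class `𝓟(F₀)` of a file placement `F₀` with distinguished level `l`:
all file placements on the board with the same number of rooks as `F₀` which agree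
with `F₀` outside level `l`, whose rooks in level `l` occupy the same columns as those
of `F₀`, and whose leftmost rook in level `l` occupies the same cell as the leftmost
rook of `F₀` in level `l`. -/
def classOf (m n : ℕ) (b : ℕ → ℕ) (l : ℕ) (F₀ : Finset (ℕ × ℕ)) :
    Finset (Finset (ℕ × ℕ)) :=
  (filePlacements n b F₀.card).filter fun F =>
    (F.filter fun p => levelOf m p.2 ≠ l) = (F₀.filter fun p => levelOf m p.2 ≠ l) ∧
    (rooksInLevel m F l).image Prod.fst = (rooksInLevel m F₀ l).image Prod.fst ∧
    ∀ p ∈ rooksInLevel m F l, (∀ q ∈ rooksInLevel m F l, p.1 ≤ q.1) → p ∈ F₀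

section StatementFourAux

lemma mem_cellFinset {n : ℕ} {b : ℕ → ℕ} {p : ℕ × ℕ} :
    p ∈ cellFinset n b ↔ p.1 < n ∧ 1 ≤ p.2 ∧ p.2 ≤ b p.1 := by
  simp only [cellFinset, Finset.mem_filter, Finset.mem_product, Finset.mem_range,
    Finset.mem_Icc]
  constructor
  · rintro ⟨⟨h1, h2, _⟩, h3⟩; exact ⟨h1, h2, h3⟩
  · rintro ⟨h1, h2, h3⟩
    exact ⟨⟨h1, h2, h3.trans (Finset.le_sup (Finset.mem_range.2 h1))⟩, h3⟩

lemma mem_filePlacements {n k : ℕ} {b : ℕ → ℕ} {F : Finset (ℕ × ℕ)} :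
    F ∈ filePlacements n b k ↔
      F ⊆ cellFinset n b ∧ F.card = k ∧ ∀ p ∈ F, ∀ q ∈ F, p ≠ q → p.1 ≠ q.1 := by
  simp [filePlacements, and_assoc]

lemma filePlacements_card_le {n k : ℕ} {b : ℕ → ℕ} {F : Finset (ℕ × ℕ)}
    (h : F ∈ filePlacements n b k) : k ≤ n := by
  obtain ⟨hsub, hcard, hcol⟩ := mem_filePlacements.1 h
  have hinj : Set.InjOn Prod.fst (↑F : Set (ℕ × ℕ)) := by
    intro p hp q hq hpq
    by_contra hne
    exact hcol p hp q hq hne hpq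
  have h1 : (F.image Prod.fst).card = F.card := Finset.card_image_of_injOn hinj
  have hsub2 : F.image Prod.fst ⊆ Finset.range n := by
    intro i hi
    obtain ⟨p, hp, rfl⟩ := Finset.mem_image.1 hi
    exact Finset.mem_range.2 (mem_cellFinset.1 (hsub hp)).1
  calc k = F.card := hcard.symm
    _ = (F.image Prod.fst).card := h1.symm
    _ ≤ n := by simpa using Finset.card_le_card hsub2

lemma filePlacements_zero (n : ℕ) (b : ℕ → ℕ) : filePlacements n b 0 = {∅} := by
  ext F
  simp only [mem_filePlacements, Finset.mem_singleton, Finset.card_eq_zero]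
  constructor
  · rintro ⟨-, h, -⟩; exact h
  · rintro rfl
    exact ⟨Finset.empty_subset _, rfl, by simp⟩

lemma wtm_empty (m : ℕ) : wtm m ∅ = 1 := by simp [wtm]

lemma fWeightNum_zero (m n : ℕ) (b : ℕ → ℕ) : fWeightNum m n b 0 = 1 := by
  simp [fWeightNum, filePlacements_zero, wtm_empty]

lemma fWeightNum_eq_zero {m n k : ℕ} (b : ℕ → ℕ) (h : n < k) : fWeightNum m n b k = 0 := by
  have hemp : filePlacements n b k = ∅ := by
    rw [Finset.eq_empty_iff_forall_notMem]
    intro F hF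
    exact absurd (filePlacements_card_le hF) (by omega)
  simp [fWeightNum, hemp]

lemma mfall_succ (x : ℝ) (m k : ℕ) : mfall x m (k + 1) = mfall x m k * (x - m * k) := by
  rw [mfall, Finset.prod_range_succ, ← mfall]

lemma wtm_insert (m : ℕ) (F : Finset (ℕ × ℕ)) (c : ℕ × ℕ) (hc : c ∉ F) :
    wtm m (insert c F) =
      (1 - (m : ℝ) * (F.filter fun p => p.2 = c.2).card) * wtm m F := by
  classical
  have hfj : ((insert c F).filter fun p => p.2 = c.2)
      = insert c (F.filter fun p => p.2 = c.2) := by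
    rw [Finset.filter_insert, if_pos rfl]
  have hcnot : c ∉ F.filter fun p => p.2 = c.2 := fun h => hc (Finset.mem_filter.1 h).1
  have hcardj : ((insert c F).filter fun p => p.2 = c.2).card
      = (F.filter fun p => p.2 = c.2).card + 1 := by
    rw [hfj, Finset.card_insert_of_notMem hcnot]
  have hfr : ∀ r, r ≠ c.2 → ((insert c F).filter fun p => p.2 = r)
      = F.filter fun p => p.2 = r := by
    intro r hr
    rw [Finset.filter_insert, if_neg (fun h => hr (by simpa using h.symm))]
  have hstep : mfall 1 m ((F.filter fun p => p.2 = c.2).card + 1)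
      = (1 - (m : ℝ) * (F.filter fun p => p.2 = c.2).card)
        * mfall 1 m ((F.filter fun p => p.2 = c.2).card) := by
    rw [mfall_succ]; ring
  by_cases hj : c.2 ∈ F.image Prod.snd
  · have himg2 : (insert c F).image Prod.snd = F.image Prod.snd := by
      rw [Finset.image_insert, Finset.insert_eq_self.2 hj]
    rw [wtm, himg2, ← Finset.mul_prod_erase _ _ hj, hcardj, hstep, wtm,
      ← Finset.mul_prod_erase _ _ hj]
    have hrest : ∀ r ∈ (F.image Prod.snd).erase c.2,
        mfall 1 m (((insert c F).filter fun p => p.2 = r).card)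
          = mfall 1 m ((F.filter fun p => p.2 = r).card) := by
      intro r hr
      rw [hfr r (Finset.ne_of_mem_erase hr)]
    rw [Finset.prod_congr rfl hrest]
    ring
  · have hempty : (F.filter fun p => p.2 = c.2) = ∅ := by
      rw [Finset.eq_empty_iff_forall_notMem]
      intro p hp
      obtain ⟨hpF, hp2⟩ := Finset.mem_filter.1 hp
      exact hj (Finset.mem_image.2 ⟨p, hpF, hp2⟩)
    rw [wtm, Finset.image_insert, Finset.prod_insert hj, hfj, hempty]
    have hrest : ∀ r ∈ F.image Prod.snd,
        mfall 1 m (((insert c F).filter fun p => p.2 = r).card)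
          = mfall 1 m ((F.filter fun p => p.2 = r).card) := by
      intro r hr
      have hne : r ≠ c.2 := fun h => hj (h ▸ hr)
      rw [hfr r hne]
    rw [Finset.prod_congr rfl hrest]
    have hcard1 : (insert c (∅ : Finset (ℕ × ℕ))).card = 1 := by simp
    rw [hcard1]
    simp [wtm, mfall]

lemma source_decomp {n k : ℕ} {b : ℕ → ℕ} {F : Finset (ℕ × ℕ)}
    (hF : F ∈ filePlacements (n + 1) b (k + 1)) (hnP : ¬ ∀ p ∈ F, p.1 ≠ n) :
    ∃ r, 1 ≤ r ∧ r ≤ b n ∧ (F.filter fun p => p.1 = n) = {(n, r)} ∧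
      F = insert (n, r) (F.filter fun p => ¬ p.1 = n) ∧
      (F.filter fun p => ¬ p.1 = n) ∈ filePlacements n b k := by
  classical
  obtain ⟨hsub, hcard, hcol⟩ := mem_filePlacements.1 hF
  push_neg at hnP
  obtain ⟨c, hcF, hc1⟩ := hnP
  have hcc : c = (n, c.2) := by rw [← hc1]
  have hcell := mem_cellFinset.1 (hsub hcF)
  refine ⟨c.2, hcell.2.1, by rw [← hc1]; exact hcell.2.2, ?_, ?_, ?_⟩
  · rw [Finset.eq_singleton_iff_unique_mem]
    constructor
    · rw [← hcc]; exact Finset.mem_filter.2 ⟨hcF, hc1⟩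
    · intro x hx
      obtain ⟨hxF, hx1⟩ := Finset.mem_filter.1 hx
      by_contra hne
      have hne' : x ≠ c := fun h => hne (by rw [h, ← hcc])
      exact hcol x hxF c hcF hne' (by rw [hx1, hc1])
  · have hsplit := Finset.filter_union_filter_not_eq (fun p : ℕ × ℕ => p.1 = n) F
    have hsing : (F.filter fun p => p.1 = n) = {(n, c.2)} := by
      rw [Finset.eq_singleton_iff_unique_mem]
      constructor
      · rw [← hcc]; exact Finset.mem_filter.2 ⟨hcF, hc1⟩
      · intro x hx
        obtain ⟨hxF, hx1⟩ := Finset.mem_filter.1 hx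
        by_contra hne
        have hne' : x ≠ c := fun h => hne (by rw [h, ← hcc])
        exact hcol x hxF c hcF hne' (by rw [hx1, hc1])
    calc F = (F.filter fun p => p.1 = n) ∪ (F.filter fun p => ¬ p.1 = n) := hsplit.symm
      _ = insert (n, c.2) (F.filter fun p => ¬ p.1 = n) := by
          rw [hsing, ← Finset.insert_eq]
  · have hnot : (n, c.2) ∉ F.filter fun p => ¬ p.1 = n := by
      intro h
      exact (Finset.mem_filter.1 h).2 rfl
    have hsing : (F.filter fun p => p.1 = n) = {(n, c.2)} := by
      rw [Finset.eq_singleton_iff_unique_mem]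
      constructor
      · rw [← hcc]; exact Finset.mem_filter.2 ⟨hcF, hc1⟩
      · intro x hx
        obtain ⟨hxF, hx1⟩ := Finset.mem_filter.1 hx
        by_contra hne
        have hne' : x ≠ c := fun h => hne (by rw [h, ← hcc])
        exact hcol x hxF c hcF hne' (by rw [hx1, hc1])
    have hFeq : F = insert (n, c.2) (F.filter fun p => ¬ p.1 = n) := by
      calc F = (F.filter fun p => p.1 = n) ∪ (F.filter fun p => ¬ p.1 = n) :=
            (Finset.filter_union_filter_not_eq _ F).symm
        _ = insert (n, c.2) (F.filter fun p => ¬ p.1 = n) := by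
            rw [hsing, ← Finset.insert_eq]
    refine mem_filePlacements.2 ⟨?_, ?_, ?_⟩
    · intro p hp
      obtain ⟨hpF, hp1⟩ := Finset.mem_filter.1 hp
      have h := mem_cellFinset.1 (hsub hpF)
      exact mem_cellFinset.2 ⟨by omega, h.2.1, h.2.2⟩
    · have h1 : (insert (n, c.2) (F.filter fun p => ¬ p.1 = n)).card
          = (F.filter fun p => ¬ p.1 = n).card + 1 := Finset.card_insert_of_notMem hnot
      rw [← hFeq] at h1
      omega
    · intro p hp q hq hpq
      exact hcol p (Finset.mem_filter.1 hp).1 q (Finset.mem_filter.1 hq).1 hpq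

lemma insert_mem_filePlacements {n k : ℕ} {b : ℕ → ℕ} {F' : Finset (ℕ × ℕ)} {r : ℕ}
    (hF' : F' ∈ filePlacements n b k) (hr1 : 1 ≤ r) (hr2 : r ≤ b n) :
    insert (n, r) F' ∈ filePlacements (n + 1) b (k + 1) ∧ (n, r) ∉ F' := by
  classical
  obtain ⟨hsub, hcard, hcol⟩ := mem_filePlacements.1 hF'
  have hcols : ∀ p ∈ F', p.1 < n := fun p hp => (mem_cellFinset.1 (hsub hp)).1
  have hnot : (n, r) ∉ F' := fun h => absurd (hcols _ h) (by simp)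
  refine ⟨mem_filePlacements.2 ⟨?_, ?_, ?_⟩, hnot⟩
  · intro p hp
    rcases Finset.mem_insert.1 hp with rfl | hp'
    · exact mem_cellFinset.2 ⟨by omega, hr1, hr2⟩
    · have h := mem_cellFinset.1 (hsub hp')
      exact mem_cellFinset.2 ⟨by omega, h.2.1, h.2.2⟩
  · rw [Finset.card_insert_of_notMem hnot, hcard]
  · intro p hp q hq hpq
    rcases Finset.mem_insert.1 hp with rfl | hp' <;>
      rcases Finset.mem_insert.1 hq with rfl | hq'
    · exact absurd rfl hpq
    · have := hcols q hq'; simp only []; omega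
    · have := hcols p hp'; simp only []; omega
    · exact hcol p hp' q hq' hpq

lemma fWeightNum_succ_col (m n : ℕ) (b : ℕ → ℕ) (hble : ∀ i, i < n → b i ≤ b n) (k : ℕ) :
    fWeightNum m (n + 1) b (k + 1) =
      fWeightNum m n b (k + 1) + ((b n : ℝ) - m * k) * fWeightNum m n b k := by
  classical
  rw [fWeightNum,
    ← Finset.sum_filter_add_sum_filter_not (filePlacements (n + 1) b (k + 1))
      (fun F => ∀ p ∈ F, p.1 ≠ n)]
  have hA : (filePlacements (n + 1) b (k + 1)).filter (fun F => ∀ p ∈ F, p.1 ≠ n)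
      = filePlacements n b (k + 1) := by
    ext F
    simp only [Finset.mem_filter, mem_filePlacements]
    constructor
    · rintro ⟨⟨hsub, hcard, hcol⟩, hP⟩
      refine ⟨fun p hp => ?_, hcard, hcol⟩
      have h := mem_cellFinset.1 (hsub hp)
      have := hP p hp
      exact mem_cellFinset.2 ⟨by omega, h.2.1, h.2.2⟩
    · rintro ⟨hsub, hcard, hcol⟩
      have hcols : ∀ p ∈ F, p.1 < n := fun p hp => (mem_cellFinset.1 (hsub hp)).1
      refine ⟨⟨fun p hp => ?_, hcard, hcol⟩, fun p hp => by have := hcols p hp; omega⟩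
      have h := mem_cellFinset.1 (hsub hp)
      exact mem_cellFinset.2 ⟨by omega, h.2.1, h.2.2⟩
  have hB : ∑ F ∈ (filePlacements (n + 1) b (k + 1)).filter
        (fun F => ¬ ∀ p ∈ F, p.1 ≠ n), wtm m F
      = ((b n : ℝ) - m * k) * fWeightNum m n b k := by
    have hbij : ∑ F ∈ (filePlacements (n + 1) b (k + 1)).filter
          (fun F => ¬ ∀ p ∈ F, p.1 ≠ n), wtm m F
        = ∑ q ∈ (filePlacements n b k) ×ˢ Finset.Icc 1 (b n),
            wtm m (insert (n, q.2) q.1) := by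
      refine Finset.sum_nbij'
        (i := fun F => (F.filter fun p => ¬ p.1 = n, (F.filter fun p => p.1 = n).sup Prod.snd))
        (j := fun q => insert (n, q.2) q.1) ?_ ?_ ?_ ?_ ?_
      · intro F hF
        obtain ⟨hF, hnP⟩ := Finset.mem_filter.1 hF
        obtain ⟨r, hr1, hr2, hsing, hFeq, hmem⟩ := source_decomp hF (by simpa using hnP)
        rw [hsing, Finset.sup_singleton]
        exact Finset.mem_product.2 ⟨hmem, Finset.mem_Icc.2 ⟨hr1, hr2⟩⟩
      · intro q hq
        obtain ⟨hq1, hq2⟩ := Finset.mem_product.1 hq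
        obtain ⟨hr1, hr2⟩ := Finset.mem_Icc.1 hq2
        obtain ⟨hmem, -⟩ := insert_mem_filePlacements hq1 hr1 hr2
        refine Finset.mem_filter.2 ⟨hmem, ?_⟩
        push_neg
        exact ⟨(n, q.2), Finset.mem_insert_self _ _, rfl⟩
      · intro F hF
        obtain ⟨hF, hnP⟩ := Finset.mem_filter.1 hF
        obtain ⟨r, hr1, hr2, hsing, hFeq, hmem⟩ := source_decomp hF (by simpa using hnP)
        simp only [hsing, Finset.sup_singleton]
        exact hFeq.symm
      · intro q hq
        obtain ⟨hq1, hq2⟩ := Finset.mem_product.1 hq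
        obtain ⟨hr1, hr2⟩ := Finset.mem_Icc.1 hq2
        obtain ⟨hsub, hcard, hcol⟩ := mem_filePlacements.1 hq1
        have hcols : ∀ p ∈ q.1, p.1 < n := fun p hp => (mem_cellFinset.1 (hsub hp)).1
        have h1 : ((insert (n, q.2) q.1).filter fun p => ¬ p.1 = n) = q.1 := by
          rw [Finset.filter_insert, if_neg (by simp)]
          exact Finset.filter_true_of_mem fun p hp => by have := hcols p hp; omega
        have h2 : ((insert (n, q.2) q.1).filter fun p => p.1 = n) = {(n, q.2)} := by
          rw [Finset.filter_insert, if_pos rfl]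
          have : (q.1.filter fun p => p.1 = n) = ∅ := by
            rw [Finset.filter_false_of_mem]
            intro p hp
            have := hcols p hp; omega
          rw [this]
          rfl
        rw [h1, h2, Finset.sup_singleton]
      · intro F hF
        obtain ⟨hF, hnP⟩ := Finset.mem_filter.1 hF
        obtain ⟨r, hr1, hr2, hsing, hFeq, hmem⟩ := source_decomp hF (by simpa using hnP)
        simp only [hsing, Finset.sup_singleton]
        conv_lhs => rw [hFeq]
    rw [hbij, Finset.sum_product]
    have key : ∀ F' ∈ filePlacements n b k,
        ∑ r ∈ Finset.Icc 1 (b n), wtm m (insert (n, r) F')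
          = ((b n : ℝ) - m * k) * wtm m F' := by
      intro F' hF'
      obtain ⟨hsub, hcard, hcol⟩ := mem_filePlacements.1 hF'
      have hnotmem : ∀ r, (n, r) ∉ F' := by
        intro r hr
        have := (mem_cellFinset.1 (hsub hr)).1
        simp at this
      have hterm : ∀ r ∈ Finset.Icc 1 (b n), wtm m (insert (n, r) F')
          = (1 - (m : ℝ) * (F'.filter fun p => p.2 = r).card) * wtm m F' := by
        intro r _
        exact wtm_insert m F' (n, r) (hnotmem r)
      rw [Finset.sum_congr rfl hterm, ← Finset.sum_mul]
      congr 1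
      have hfib : F'.card = ∑ r ∈ Finset.Icc 1 (b n), (F'.filter fun p => p.2 = r).card :=
        Finset.card_eq_sum_card_fiberwise (fun p hp => by
          have h := mem_cellFinset.1 (hsub hp)
          exact Finset.mem_Icc.2 ⟨h.2.1, h.2.2.trans (hble p.1 h.1)⟩)
      have hsum : ∑ r ∈ Finset.Icc 1 (b n),
          (1 - (m : ℝ) * (F'.filter fun p => p.2 = r).card)
          = ((Finset.Icc 1 (b n)).card : ℝ)
            - (m : ℝ) * ∑ r ∈ Finset.Icc 1 (b n), ((F'.filter fun p => p.2 = r).card : ℝ) := by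
        rw [Finset.sum_sub_distrib, Finset.sum_const, nsmul_eq_mul, mul_one, Finset.mul_sum]
      rw [hsum, Nat.card_Icc]
      have hcast : (∑ r ∈ Finset.Icc 1 (b n), ((F'.filter fun p => p.2 = r).card : ℝ))
          = (k : ℝ) := by
        rw [← Nat.cast_sum, ← hfib, hcard]
      rw [hcast]
      have : b n + 1 - 1 = b n := by omega
      rw [this]
    rw [Finset.sum_congr rfl key, ← Finset.mul_sum, fWeightNum]
  rw [hA, hB]
  simp [fWeightNum]

lemma ferrers_le {n : ℕ} {b : ℕ → ℕ} (hb : FerrersMono n b) :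
    ∀ i j, i ≤ j → j < n → b i ≤ b j := by
  have key : ∀ d i, i + d < n → b i ≤ b (i + d) := by
    intro d
    induction d with
    | zero => intro i _; simp
    | succ d ihd =>
      intro i h
      have h1 : i + d < n := by omega
      have h2 : b (i + d) ≤ b (i + d + 1) := hb (i + d) (by omega)
      calc b i ≤ b (i + d) := ihd i h1
        _ ≤ b (i + (d + 1)) := by rw [show i + (d + 1) = i + d + 1 from by ring]; exact h2
  intro i j hij hjn
  have := key (j - i) i (by omega)
  rwa [show i + (j - i) = j from by omega] at this

end StatementFourAux

/-- Barrese–Loehr–Remmel–Sagan.  For a Ferrers board `B = (b_1, …, b_n)`,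
`Σ_{k=0}^n f_{k,m}(B) x↓_{n-k,m} = ∏_{i=1}^n (x + b_i - (i-1)m)`. -/
theorem statement4 (m : ℕ) (hm : 0 < m) (n : ℕ) (b : ℕ → ℕ)
    (hb : FerrersMono n b) (x : ℝ) :
    ∑ k ∈ Finset.range (n + 1), fWeightNum m n b k * mfall x m (n - k) =
      ∏ i ∈ Finset.range n, (x + (b i : ℝ) - (i : ℝ) * (m : ℝ)) := by
  induction n with
  | zero => simp [fWeightNum_zero, mfall]
  | succ n ih =>
    have hbn : FerrersMono n b := fun i h => hb i (by omega)
    have hble : ∀ i, i < n → b i ≤ b n :=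
      fun i h => ferrers_le hb i n (le_of_lt h) (Nat.lt_succ_self n)
    have ihn := ih hbn
    rw [Finset.prod_range_succ, ← ihn, Finset.sum_range_succ']
    have hstep : ∀ k ∈ Finset.range (n + 1),
        fWeightNum m (n + 1) b (k + 1) * mfall x m (n + 1 - (k + 1)) =
        fWeightNum m n b (k + 1) * mfall x m (n - k)
          + ((b n : ℝ) - m * k) * (fWeightNum m n b k * mfall x m (n - k)) := by
      intro k _
      rw [fWeightNum_succ_col m n b hble k, show n + 1 - (k + 1) = n - k from by omega]
      ring
    rw [Finset.sum_congr rfl hstep, Finset.sum_add_distrib, fWeightNum_zero, one_mul]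
    have hAC : (∑ k ∈ Finset.range (n + 1), fWeightNum m n b (k + 1) * mfall x m (n - k))
        + mfall x m (n + 1 - 0)
        = ∑ k ∈ Finset.range (n + 1), fWeightNum m n b k * mfall x m (n + 1 - k) := by
      have h1 : ∑ k ∈ Finset.range (n + 2), fWeightNum m n b k * mfall x m (n + 1 - k)
          = (∑ k ∈ Finset.range (n + 1), fWeightNum m n b (k + 1) * mfall x m (n - k))
            + mfall x m (n + 1 - 0) := by
        rw [Finset.sum_range_succ', fWeightNum_zero, one_mul]
        congr 1
        refine Finset.sum_congr rfl fun k _ => ?_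
        rw [show n + 1 - (k + 1) = n - k from by omega]
      have h2 : ∑ k ∈ Finset.range (n + 2), fWeightNum m n b k * mfall x m (n + 1 - k)
          = ∑ k ∈ Finset.range (n + 1), fWeightNum m n b k * mfall x m (n + 1 - k) := by
        rw [Finset.sum_range_succ, fWeightNum_eq_zero b (Nat.lt_succ_self n), zero_mul,
          add_zero]
      rw [← h1, h2]
    rw [add_right_comm, hAC, ← Finset.sum_add_distrib, Finset.sum_mul]
    refine Finset.sum_congr rfl fun k hk => ?_
    have hk' : k ≤ n := by
      have := Finset.mem_range.1 hk; omega
    have hm1 : n + 1 - k = (n - k) + 1 := by omega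
    have hc : ((n - k : ℕ) : ℝ) = (n : ℝ) - (k : ℝ) := by
      push_cast [Nat.cast_sub hk']; ring
    rw [hm1, mfall_succ, hc]
    ring
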